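/- Let 𝒞^d denote the convex cone of symmetric d×d real matrices with zero diagonal that are strictly conditionally negative definite. Then det(CM(Γ)) > 0 for every Γ ∈ 𝒞^d, and the function Γ ↦ −(1/2) log det(CM(Γ)) is strictly convex on 𝒞^d: for all Γ_1, Γ_2 ∈ 𝒞^d with Γ_1 ≠ Γ_2 and all t ∈ (0,1), −(1/2) log det(CM(tΓ_1 + (1−t)Γ_2)) < −(t/2) log det(CM(Γ_1)) − ((1−t)/2) log det(CM(Γ_2)). -/

import Mathlib

open Matrix Finset

/-- `Θ(Q)`: `Θ(Q)_{ij} = −Q_{ij}` for `i ≠ j` and `Θ(Q)_{ii} = ∑_{j≠i} Q_{ij}`. -/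
noncomputable def thetaOf {d : ℕ} (Q : Matrix (Fin d) (Fin d) ℝ) :
    Matrix (Fin d) (Fin d) ℝ :=
  Matrix.of fun i j => if i = j then ∑ l ∈ univ.filter (fun l => l ≠ i), Q i l else -Q i j

/-- Membership in `𝒬`: symmetric, zero diagonal, and `xᵀΘ(Q)x > 0` for every nonzero
`x` with `∑ᵢ xᵢ = 0`. -/
def memQ {d : ℕ} (Q : Matrix (Fin d) (Fin d) ℝ) : Prop :=
  Q.IsSymm ∧ (∀ i, Q i i = 0) ∧
    ∀ x : Fin d → ℝ, x ≠ 0 → (∑ i, x i) = 0 → 0 < x ⬝ᵥ (thetaOf Q).mulVec x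

/-- The centering matrix `P = I − (1/d)𝟙𝟙ᵀ`. -/
noncomputable def Pmat (d : ℕ) : Matrix (Fin d) (Fin d) ℝ :=
  1 - ((d : ℝ)⁻¹) • Matrix.of (fun _ _ : Fin d => (1 : ℝ))

/-- `S` is the matrix `Σ(Q)`: the unique symmetric matrix with `Σ(Q)𝟙 = 0` and
`Θ(Q)Σ(Q) = P`. -/
def isSigmaOf {d : ℕ} (Q S : Matrix (Fin d) (Fin d) ℝ) : Prop :=
  S.IsSymm ∧ S.mulVec (fun _ => 1) = 0 ∧ thetaOf Q * S = Pmat d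

/-- The variogram associated with `Σ`: `Γ_{ij} = Σ_{ii} + Σ_{jj} − 2Σ_{ij}`. -/
noncomputable def gammaOf {d : ℕ} (S : Matrix (Fin d) (Fin d) ℝ) :
    Matrix (Fin d) (Fin d) ℝ :=
  Matrix.of fun i j => S i i + S j j - 2 * S i j

/-- The inner product `⟨A, B⟩ = ∑_{i<j} A_{ij} B_{ij}` on symmetric matrices with
zero diagonal. -/
noncomputable def sinner {d : ℕ} (A B : Matrix (Fin d) (Fin d) ℝ) : ℝ :=
  ∑ p ∈ univ.filter (fun p : Fin d × Fin d => p.1 < p.2), A p.1 p.2 * B p.1 p.2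

open Classical in
/-- The spanning tree polynomial `τ(Q) = ∑_T ∏_{{i,j}∈T} Q_{ij}`, summed over all
spanning trees of the complete graph on `{1, …, d}`. -/
noncomputable def tau {d : ℕ} (Q : Matrix (Fin d) (Fin d) ℝ) : ℝ :=
  ∑ T ∈ (univ : Finset (SimpleGraph (Fin d))).filter (fun T => T.IsTree),
    ∏ p ∈ univ.filter (fun p : Fin d × Fin d => p.1 < p.2 ∧ T.Adj p.1 p.2), Q p.1 p.2

/-- The Cayley–Menger matrix of `Γ`. -/
noncomputable def CM {d : ℕ} (Γ : Matrix (Fin d) (Fin d) ℝ) :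
    Matrix (Fin (d + 1)) (Fin (d + 1)) ℝ :=
  Matrix.of fun a b =>
    if ha : (a : ℕ) < d then
      (if hb : (b : ℕ) < d then -Γ ⟨a, ha⟩ ⟨b, hb⟩ / 2 else 1)
    else (if (b : ℕ) < d then -1 else 0)

/-- Membership in the cone `𝒞^d` of symmetric matrices with zero diagonal that are
strictly conditionally negative definite. -/
def memC {d : ℕ} (Γ : Matrix (Fin d) (Fin d) ℝ) : Prop :=
  Γ.IsSymm ∧ (∀ i, Γ i i = 0) ∧
    ∀ x : Fin d → ℝ, x ≠ 0 → (∑ i, x i) = 0 → x ⬝ᵥ Γ.mulVec x < 0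
noncomputable def Nmat {n : ℕ} (Γ : Matrix (Fin (n+1)) (Fin (n+1)) ℝ) :
    Matrix (Fin n) (Fin n) ℝ :=
  Matrix.of fun j k =>
    Γ (Fin.castSucc j) (Fin.last n) / 2 + Γ (Fin.last n) (Fin.castSucc k) / 2
      - Γ (Fin.castSucc j) (Fin.castSucc k) / 2 - Γ (Fin.last n) (Fin.last n) / 2

lemma CM_apply_lt {d : ℕ} (Γ : Matrix (Fin d) (Fin d) ℝ) (a b : Fin (d+1))
    (ha : (a : ℕ) < d) (hb : (b : ℕ) < d) : CM Γ a b = -Γ ⟨a, ha⟩ ⟨b, hb⟩ / 2 := by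
  simp [CM, dif_pos ha, dif_pos hb]

lemma CM_apply_lt_last {d : ℕ} (Γ : Matrix (Fin d) (Fin d) ℝ) (a b : Fin (d+1))
    (ha : (a : ℕ) < d) (hb : ¬ (b : ℕ) < d) : CM Γ a b = 1 := by
  simp [CM, dif_pos ha, dif_neg hb]

lemma CM_apply_last_lt {d : ℕ} (Γ : Matrix (Fin d) (Fin d) ℝ) (a b : Fin (d+1))
    (ha : ¬ (a : ℕ) < d) (hb : (b : ℕ) < d) : CM Γ a b = -1 := by
  simp [CM, dif_neg ha, if_pos hb]

lemma CM_apply_last_last {d : ℕ} (Γ : Matrix (Fin d) (Fin d) ℝ) (a b : Fin (d+1))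
    (ha : ¬ (a : ℕ) < d) (hb : ¬ (b : ℕ) < d) : CM Γ a b = 0 := by
  simp [CM, dif_neg ha, if_neg hb]

lemma det_CM {n : ℕ} (Γ : Matrix (Fin (n+1)) (Fin (n+1)) ℝ) :
    (CM Γ).det = (Nmat Γ).det := by
  classical
  let e : Fin n ⊕ Fin 2 ≃ Fin (n+2) := finSumFinEquiv
  have hsub := Matrix.det_submatrix_equiv_self e (CM Γ)
  set A₀ : Matrix (Fin n) (Fin n) ℝ :=
    Matrix.of fun j k => -Γ (Fin.castSucc j) (Fin.castSucc k) / 2 with hA₀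
  set B₀ : Matrix (Fin n) (Fin 2) ℝ :=
    Matrix.of fun j k => if k = 0 then -Γ (Fin.castSucc j) (Fin.last n) / 2 else 1 with hB₀
  set C₀ : Matrix (Fin 2) (Fin n) ℝ :=
    Matrix.of fun k j => if k = 0 then -Γ (Fin.last n) (Fin.castSucc j) / 2 else -1 with hC₀
  set D₀ : Matrix (Fin 2) (Fin 2) ℝ :=
    !![-Γ (Fin.last n) (Fin.last n)/2, 1; -1, 0] with hD₀
  have hdetD : D₀.det = 1 := by simp [hD₀, Matrix.det_fin_two]
  have hvl : ∀ j : Fin n, ((e (Sum.inl j) : Fin (n+2)) : ℕ) = (j : ℕ) := by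
    intro j; simp [e]
  have hv0 : ((e (Sum.inr 0) : Fin (n+2)) : ℕ) = n := by simp [e]
  have hv1 : ((e (Sum.inr 1) : Fin (n+2)) : ℕ) = n + 1 := by simp [e]
  have hblock : (CM Γ).submatrix e e = Matrix.fromBlocks A₀ B₀ C₀ D₀ := by
    ext a b
    rcases a with j | j <;> rcases b with k | k
    · rw [Matrix.submatrix_apply, Matrix.fromBlocks_apply₁₁,
        CM_apply_lt Γ _ _ (by simp [e] <;> omega) (by simp [e] <;> omega)]
      simp only [hA₀, Matrix.of_apply]
      congr 2 <;> apply Fin.ext <;> simp [e, Fin.castSucc]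
    · fin_cases k
      · rw [Matrix.submatrix_apply, Matrix.fromBlocks_apply₁₂,
          CM_apply_lt Γ _ _ (by simp [e] <;> omega) (by simp [e] <;> omega)]
        simp only [hB₀, Matrix.of_apply, if_pos rfl]
        congr 2 <;> apply Fin.ext <;> simp [e, Fin.castSucc, Fin.last]
      · rw [Matrix.submatrix_apply, Matrix.fromBlocks_apply₁₂,
          CM_apply_lt_last Γ _ _ (by simp [e] <;> omega) (by simp [e] <;> omega)]
        simp [hB₀]
    · fin_cases j
      · rw [Matrix.submatrix_apply, Matrix.fromBlocks_apply₂₁,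
          CM_apply_lt Γ _ _ (by simp [e] <;> omega) (by simp [e] <;> omega)]
        simp only [hC₀, Matrix.of_apply, if_pos rfl]
        congr 2 <;> apply Fin.ext <;> simp [e, Fin.castSucc, Fin.last]
      · rw [Matrix.submatrix_apply, Matrix.fromBlocks_apply₂₁,
          CM_apply_last_lt Γ _ _ (by simp [e] <;> omega) (by simp [e] <;> omega)]
        simp [hC₀]
    · fin_cases j <;> fin_cases k
      · rw [Matrix.submatrix_apply, Matrix.fromBlocks_apply₂₂,
          CM_apply_lt Γ _ _ (by simp [e] <;> omega) (by simp [e] <;> omega)]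
        simp only [hD₀, Fin.mk_zero, Matrix.cons_val', Matrix.cons_val_zero,
          Matrix.empty_val', Matrix.cons_val_fin_one]
        congr 2 <;> apply Fin.ext <;> simp [e, Fin.last]
      · rw [Matrix.submatrix_apply, Matrix.fromBlocks_apply₂₂,
          CM_apply_lt_last Γ _ _ (by simp [e] <;> omega) (by simp [e] <;> omega)]
        simp [hD₀]
      · rw [Matrix.submatrix_apply, Matrix.fromBlocks_apply₂₂,
          CM_apply_last_lt Γ _ _ (by simp [e] <;> omega) (by simp [e] <;> omega)]
        simp [hD₀]
      · rw [Matrix.submatrix_apply, Matrix.fromBlocks_apply₂₂,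
          CM_apply_last_last Γ _ _ (by simp [e] <;> omega) (by simp [e] <;> omega)]
        simp [hD₀]
  haveI : Invertible D₀ := D₀.invertibleOfIsUnitDet (by rw [hdetD]; exact isUnit_one)
  rw [← hsub, hblock, Matrix.det_fromBlocks₂₂, hdetD, one_mul]
  congr 1
  have hinv : (⅟ D₀ : Matrix (Fin 2) (Fin 2) ℝ) =
      !![0, -1; 1, -Γ (Fin.last n) (Fin.last n)/2] := by
    rw [Matrix.invOf_eq_nonsing_inv, Matrix.inv_def, hdetD, Matrix.adjugate_fin_two]
    simp [hD₀]
  rw [hinv]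
  ext j k
  simp only [Matrix.sub_apply, Nmat, Matrix.of_apply, hA₀, Matrix.mul_apply, Fin.sum_univ_two]
  simp [hB₀, hC₀]
  ring

noncomputable def Vmat (n : ℕ) : Matrix (Fin (n+1)) (Fin n) ℝ :=
  Matrix.of fun a j =>
    (if a = Fin.castSucc j then (1:ℝ) else 0) - (if a = Fin.last n then 1 else 0)

lemma Nmat_eq_conj {n : ℕ} (Γ : Matrix (Fin (n+1)) (Fin (n+1)) ℝ) :
    Nmat Γ = (Vmat n)ᵀ * (((-2 : ℝ)⁻¹) • Γ) * Vmat n := by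
  ext j k
  simp only [Nmat, Matrix.of_apply, Matrix.mul_apply, Matrix.transpose_apply, Vmat,
    Matrix.smul_apply, smul_eq_mul, sub_mul, mul_sub, ite_mul, mul_ite, one_mul, mul_one,
    zero_mul, mul_zero, Finset.sum_sub_distrib, Finset.sum_ite_eq', Finset.mem_univ, if_true]
  ring

lemma Vmat_mulVec {n : ℕ} (x : Fin n → ℝ) :
    (Vmat n) *ᵥ x = Fin.snoc x (-∑ j, x j) := by
  funext a
  simp only [Matrix.mulVec, dotProduct, Vmat, Matrix.of_apply, sub_mul, ite_mul,
    one_mul, zero_mul, Finset.sum_sub_distrib]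
  induction a using Fin.lastCases with
  | last =>
    simp [Fin.snoc_last, (Fin.castSucc_lt_last _).ne']
  | cast i =>
    simp [Fin.snoc_castSucc, Fin.castSucc_inj, (Fin.castSucc_lt_last i).ne,
      Finset.sum_ite_eq', Finset.mem_univ]

lemma Nmat_posDef {n : ℕ} {Γ : Matrix (Fin (n+1)) (Fin (n+1)) ℝ} (h : memC Γ) :
    (Nmat Γ).PosDef := by
  obtain ⟨hsymm, hdiag, hneg⟩ := h
  have hsym : ∀ a b, Γ a b = Γ b a := fun a b => hsymm.apply b a
  refine Matrix.PosDef.of_dotProduct_mulVec_pos ?_ ?_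
  · show (Nmat Γ)ᴴ = Nmat Γ
    ext j k
    simp only [Matrix.conjTranspose_apply, Nmat, Matrix.of_apply, star_trivial]
    linear_combination (hsym (Fin.castSucc k) (Fin.last n)
      - hsym (Fin.castSucc j) (Fin.last n) - hsym (Fin.castSucc k) (Fin.castSucc j)) / 2
  · intro x hx
    have key : star x ⬝ᵥ (Nmat Γ) *ᵥ x =
        (-2 : ℝ)⁻¹ * ((Vmat n *ᵥ x) ⬝ᵥ Γ *ᵥ (Vmat n *ᵥ x)) := by
      rw [star_trivial, Nmat_eq_conj, Matrix.mul_assoc, ← Matrix.mulVec_mulVec,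
        Matrix.dotProduct_mulVec, Matrix.vecMul_transpose, ← Matrix.mulVec_mulVec,
        Matrix.smul_mulVec, dotProduct_smul, smul_eq_mul]
    rw [key]
    set y := Vmat n *ᵥ x with hy
    have hy' : y = Fin.snoc x (-∑ j, x j) := Vmat_mulVec x
    have hyne : y ≠ 0 := by
      obtain ⟨i, hi⟩ := Function.ne_iff.mp hx
      intro h0
      apply hi
      have := congrFun h0 (Fin.castSucc i)
      rwa [hy', Fin.snoc_castSucc] at this
    have hsum : (∑ a, y a) = 0 := by
      rw [hy', Fin.sum_univ_castSucc]
      simp [Fin.snoc_castSucc, Fin.snoc_last]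
    have := hneg y hyne hsum
    have h2 : (0:ℝ) < (-2 : ℝ)⁻¹ * (y ⬝ᵥ Γ *ᵥ y) := by
      apply mul_pos_of_neg_of_neg (by norm_num) this
    exact h2

lemma posDef_smul {m : Type*} [Fintype m] {M : Matrix m m ℝ} (hM : M.PosDef)
    {c : ℝ} (hc : 0 < c) : (c • M).PosDef := by
  refine Matrix.PosDef.of_dotProduct_mulVec_pos ?_ (fun x hx => ?_)
  · show (c • M)ᴴ = c • M
    rw [Matrix.conjTranspose_smul, star_trivial, hM.1]
  · rw [Matrix.smul_mulVec, dotProduct_smul, smul_eq_mul]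
    exact mul_pos hc (hM.dotProduct_mulVec_pos hx)

open scoped MatrixOrder in
lemma psd_sqrt_exists {m : Type*} [Fintype m] [DecidableEq m] {A : Matrix m m ℝ}
    (hA : A.PosSemidef) : ∃ S : Matrix m m ℝ, S.PosSemidef ∧ S * S = A :=
  ⟨CFC.sqrt A, (CFC.sqrt_nonneg A).posSemidef, CFC.sqrt_mul_sqrt_self A hA.nonneg⟩

noncomputable def psdSqrt {m : Type*} [Fintype m] [DecidableEq m] {A : Matrix m m ℝ}
    (hA : A.PosSemidef) : Matrix m m ℝ := (psd_sqrt_exists hA).choose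

lemma psdSqrt_posSemidef {m : Type*} [Fintype m] [DecidableEq m] {A : Matrix m m ℝ}
    (hA : A.PosSemidef) : (psdSqrt hA).PosSemidef := (psd_sqrt_exists hA).choose_spec.1

lemma psdSqrt_mul_self {m : Type*} [Fintype m] [DecidableEq m] {A : Matrix m m ℝ}
    (hA : A.PosSemidef) : psdSqrt hA * psdSqrt hA = A := (psd_sqrt_exists hA).choose_spec.2

lemma posDef_sqrt' {m : Type*} [Fintype m] [DecidableEq m] {A : Matrix m m ℝ}
    (hA : A.PosDef) : (psdSqrt hA.posSemidef).PosDef := by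
  set S := psdSqrt hA.posSemidef with hSdef
  have hS : S.PosSemidef := psdSqrt_posSemidef hA.posSemidef
  refine Matrix.PosDef.of_dotProduct_mulVec_pos hS.1 (fun x hx => lt_of_le_of_ne (hS.dotProduct_mulVec_nonneg x) ?_)
  intro h0
  have hSx : S *ᵥ x = 0 := (hS.dotProduct_mulVec_zero_iff x).mp h0.symm
  have hAx : A *ᵥ x = 0 := by
    rw [← psdSqrt_mul_self hA.posSemidef, ← Matrix.mulVec_mulVec, hSx, Matrix.mulVec_zero]
  have := hA.dotProduct_mulVec_pos hx
  rw [hAx, dotProduct_zero] at this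
  exact lt_irrefl 0 this

lemma logdet_strictConcave {m : Type*} [Fintype m] [DecidableEq m]
    {A B : Matrix m m ℝ} (hA : A.PosDef) (hB : B.PosDef) (hAB : A ≠ B)
    {t : ℝ} (ht0 : 0 < t) (ht1 : t < 1) :
    t * Real.log A.det + (1 - t) * Real.log B.det <
      Real.log (t • A + (1 - t) • B).det := by
  have ht1' : 0 < 1 - t := by linarith
  set S := psdSqrt hA.posSemidef with hSdef
  have hS : S.PosDef := posDef_sqrt' hA
  have hSS : S * S = A := psdSqrt_mul_self hA.posSemidef
  have hSunit : IsUnit S.det := hS.det_pos.ne'.isUnit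
  have hSi : S * S⁻¹ = 1 := Matrix.mul_nonsing_inv S hSunit
  have hiS : S⁻¹ * S = 1 := Matrix.nonsing_inv_mul S hSunit
  set C := S⁻¹ * B * S⁻¹ with hCdef
  have hCD : S * C * S = B := by
    calc S * (S⁻¹ * B * S⁻¹) * S = (S * S⁻¹) * B * (S⁻¹ * S) := by
          simp only [Matrix.mul_assoc]
      _ = B := by rw [hSi, hiS, Matrix.one_mul, Matrix.mul_one]
  have hSiH : S⁻¹ᴴ = S⁻¹ := hS.1.inv
  have hCpd : C.PosDef := by
    refine Matrix.PosDef.of_dotProduct_mulVec_pos ?_ ?_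
    · show Cᴴ = C
      calc (S⁻¹ * B * S⁻¹)ᴴ = S⁻¹ᴴ * (Bᴴ * (S⁻¹)ᴴ) := by
            simp [Matrix.conjTranspose_mul, Matrix.mul_assoc]
        _ = S⁻¹ * B * S⁻¹ := by rw [hSiH, hB.1, Matrix.mul_assoc]
    · intro x hx
      have hxS : S⁻¹ *ᵥ x ≠ 0 := by
        intro h0
        apply hx
        calc x = (S * S⁻¹) *ᵥ x := by rw [hSi, Matrix.one_mulVec]
          _ = S *ᵥ (S⁻¹ *ᵥ x) := (Matrix.mulVec_mulVec _ _ _).symm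
          _ = 0 := by rw [h0, Matrix.mulVec_zero]
      have key : star x ⬝ᵥ C *ᵥ x = star (S⁻¹ *ᵥ x) ⬝ᵥ B *ᵥ (S⁻¹ *ᵥ x) := by
        rw [Matrix.star_mulVec, hSiH, hCdef, Matrix.mul_assoc, ← Matrix.mulVec_mulVec,
          ← Matrix.mulVec_mulVec, Matrix.dotProduct_mulVec]
      rw [key]
      exact hB.dotProduct_mulVec_pos hxS
  -- spectral data of C
  have hCh := hCpd.1
  set lam := hCh.eigenvalues with hlam
  have hlampos : ∀ i, 0 < lam i := hCpd.eigenvalues_pos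
  set U : Matrix m m ℝ := (hCh.eigenvectorUnitary : Matrix m m ℝ) with hU
  have hUU : U * star U = 1 := Matrix.mem_unitaryGroup_iff.mp hCh.eigenvectorUnitary.2
  have hspec : C = U * Matrix.diagonal lam * star U := by
    have h := hCh.spectral_theorem
    rw [Unitary.conjStarAlgAut_apply] at h
    rwa [show (RCLike.ofReal ∘ hCh.eigenvalues : m → ℝ) = lam from funext fun i => by simp [hlam]] at h
  set M : Matrix m m ℝ := t • 1 + (1 - t) • C with hM
  have hd : t • (1 : Matrix m m ℝ) + (1 - t) • Matrix.diagonal lam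
      = Matrix.diagonal (fun i => t + (1 - t) * lam i) := by
    ext i k
    by_cases h : i = k <;>
      simp [h, Matrix.diagonal_apply, Matrix.one_apply, Matrix.add_apply, Matrix.smul_apply]
  have hMspec : M = U * Matrix.diagonal (fun i => t + (1 - t) * lam i) * star U := by
    rw [← hd, hM, hspec]
    simp only [Matrix.mul_add, Matrix.add_mul, mul_smul_comm, smul_mul_assoc,
      Matrix.mul_one, hUU, Matrix.mul_assoc]
  have hdetM : M.det = ∏ i, (t + (1 - t) * lam i) := by
    have h2 : U.det * (star U).det = 1 := by rw [← Matrix.det_mul, hUU, Matrix.det_one]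
    rw [hMspec, Matrix.det_mul, Matrix.det_mul, Matrix.det_diagonal,
      mul_comm U.det _, mul_assoc, h2, mul_one]
  have hdetC : C.det = ∏ i, lam i := by
    have h := hCh.det_eq_prod_eigenvalues
    simpa using h
  have hdetB : B.det = A.det * C.det := by
    rw [← hCD, ← hSS]
    simp only [Matrix.det_mul]
    ring
  have hdetAB : (t • A + (1 - t) • B).det = A.det * M.det := by
    have hconj : t • A + (1 - t) • B = S * M * S := by
      rw [hM]
      simp only [Matrix.mul_add, Matrix.add_mul, mul_smul_comm, smul_mul_assoc,
        Matrix.mul_one, hSS]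
      rw [hCD]
    rw [hconj, ← hSS]
    simp only [Matrix.det_mul]
    ring
  have hpos : ∀ i, 0 < t + (1 - t) * lam i := fun i => by nlinarith [hlampos i]
  have hlogle : ∀ i, (1 - t) * Real.log (lam i) ≤ Real.log (t + (1 - t) * lam i) := by
    intro i
    rcases eq_or_ne (lam i) 1 with h1 | h1
    · rw [h1]
      simp
    · have h := strictConcaveOn_log_Ioi.2 (Set.mem_Ioi.mpr one_pos)
        (Set.mem_Ioi.mpr (hlampos i)) (Ne.symm h1) ht0 ht1' (by ring)
      simp only [smul_eq_mul, Real.log_one, mul_one] at h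
      linarith
  have hexists : ∃ i, lam i ≠ 1 := by
    by_contra hall
    push_neg at hall
    apply hAB
    have hC1 : C = 1 := by
      rw [hspec, show Matrix.diagonal lam = 1 by
        rw [show lam = fun _ => (1:ℝ) from funext hall]; exact Matrix.diagonal_one,
        Matrix.mul_one, hUU]
    have hBA : B = A := by rw [← hCD, hC1, Matrix.mul_one, hSS]
    exact hBA.symm
  obtain ⟨i0, hi0⟩ := hexists
  have hstrict : (1 - t) * Real.log (lam i0) < Real.log (t + (1 - t) * lam i0) := by
    have h := strictConcaveOn_log_Ioi.2 (Set.mem_Ioi.mpr one_pos)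
      (Set.mem_Ioi.mpr (hlampos i0)) (Ne.symm hi0) ht0 ht1' (by ring)
    simp only [smul_eq_mul, Real.log_one, mul_one] at h
    linarith
  have hsum : (1 - t) * Real.log C.det < Real.log M.det := by
    rw [hdetC, hdetM, Real.log_prod (fun i _ => (hlampos i).ne'),
      Real.log_prod (fun i _ => (hpos i).ne'), Finset.mul_sum]
    exact Finset.sum_lt_sum (fun i _ => hlogle i) ⟨i0, Finset.mem_univ _, hstrict⟩
  have hMdetpos : 0 < M.det := by
    rw [hdetM]
    exact Finset.prod_pos fun i _ => hpos i
  have hCdetpos : 0 < C.det := hCpd.det_pos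
  rw [hdetAB, Real.log_mul hA.det_pos.ne' hMdetpos.ne', hdetB,
    Real.log_mul hA.det_pos.ne' hCdetpos.ne']
  have hring : t * Real.log A.det + (1 - t) * (Real.log A.det + Real.log C.det)
      = Real.log A.det + (1 - t) * Real.log C.det := by ring
  linarith

lemma Nmat_combo {n : ℕ} (Γ₁ Γ₂ : Matrix (Fin (n+1)) (Fin (n+1)) ℝ) (t : ℝ) :
    Nmat (t • Γ₁ + (1 - t) • Γ₂) = t • Nmat Γ₁ + (1 - t) • Nmat Γ₂ := by
  ext j k
  simp only [Nmat, Matrix.of_apply, Matrix.add_apply, Matrix.smul_apply, smul_eq_mul]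
  ring

lemma Nmat_inj {n : ℕ} {Γ₁ Γ₂ : Matrix (Fin (n+1)) (Fin (n+1)) ℝ}
    (h₁ : memC Γ₁) (h₂ : memC Γ₂) (h : Nmat Γ₁ = Nmat Γ₂) : Γ₁ = Γ₂ := by
  obtain ⟨hs₁, hd₁, _⟩ := h₁
  obtain ⟨hs₂, hd₂, _⟩ := h₂
  have hsym₁ : ∀ a b, Γ₁ a b = Γ₁ b a := fun a b => hs₁.apply b a
  have hsym₂ : ∀ a b, Γ₂ a b = Γ₂ b a := fun a b => hs₂.apply b a
  have happ : ∀ j k, Nmat Γ₁ j k = Nmat Γ₂ j k := fun j k => by rw [h]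
  have hlast : ∀ j : Fin n,
      Γ₁ (Fin.castSucc j) (Fin.last n) = Γ₂ (Fin.castSucc j) (Fin.last n) := by
    intro j
    have h0 := happ j j
    simp only [Nmat, Matrix.of_apply] at h0
    rw [hd₁, hd₂, hd₁, hd₂, hsym₁ (Fin.last n) (Fin.castSucc j),
      hsym₂ (Fin.last n) (Fin.castSucc j)] at h0
    linarith
  have hcc : ∀ j k : Fin n,
      Γ₁ (Fin.castSucc j) (Fin.castSucc k) = Γ₂ (Fin.castSucc j) (Fin.castSucc k) := by
    intro j k
    have h0 := happ j k
    simp only [Nmat, Matrix.of_apply] at h0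
    rw [hd₁, hd₂, hsym₁ (Fin.last n) (Fin.castSucc k),
      hsym₂ (Fin.last n) (Fin.castSucc k)] at h0
    linarith [hlast j, hlast k]
  ext a b
  induction a using Fin.lastCases with
  | last =>
    induction b using Fin.lastCases with
    | last => rw [hd₁, hd₂]
    | cast k =>
      rw [hsym₁ (Fin.last n) (Fin.castSucc k), hsym₂ (Fin.last n) (Fin.castSucc k)]
      exact hlast k
  | cast j =>
    induction b using Fin.lastCases with
    | last => exact hlast j
    | cast k => exact hcc j k

/-- `det(CM(Γ)) > 0` on the cone `𝒞^d`, and `Γ ↦ −(1/2) log det(CM(Γ))` is strictly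
convex on `𝒞^d`. -/
theorem neg_log_det_CM_strictly_convex {d : ℕ} (hd : 0 < d) :
    (∀ Γ : Matrix (Fin d) (Fin d) ℝ, memC Γ → 0 < (CM Γ).det) ∧
    (∀ Γ₁ Γ₂ : Matrix (Fin d) (Fin d) ℝ, memC Γ₁ → memC Γ₂ → Γ₁ ≠ Γ₂ →
      ∀ t : ℝ, 0 < t → t < 1 →
        -(1 / 2) * Real.log ((CM (t • Γ₁ + (1 - t) • Γ₂)).det) <
          -(t / 2) * Real.log ((CM Γ₁).det)
            - ((1 - t) / 2) * Real.log ((CM Γ₂).det)) := by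
  obtain ⟨n, rfl⟩ : ∃ n, d = n + 1 := ⟨d - 1, by omega⟩
  constructor
  · intro Γ hΓ
    rw [det_CM]
    exact (Nmat_posDef hΓ).det_pos
  · intro Γ₁ Γ₂ h₁ h₂ hne t ht0 ht1
    have hN₁ := Nmat_posDef h₁
    have hN₂ := Nmat_posDef h₂
    have hNne : Nmat Γ₁ ≠ Nmat Γ₂ := fun h => hne (Nmat_inj h₁ h₂ h)
    have key := logdet_strictConcave hN₁ hN₂ hNne ht0 ht1
    rw [det_CM, det_CM, det_CM, Nmat_combo]
    set a := Real.log (Nmat Γ₁).det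
    set b := Real.log (Nmat Γ₂).det
    set c := Real.log (t • Nmat Γ₁ + (1 - t) • Nmat Γ₂).det
    have e1 : -(t / 2) * a = -(t * a) / 2 := by ring
    have e2 : -((1 - t) / 2) * b = -((1 - t) * b) / 2 := by ring
    linarith
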